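/- arXiv:1812.08415 — 2 statements merged into one kernel-verified Lean document; each statement's English description precedes it below -/
import Mathlib

section
/- With the notation of Lemma 5.8: if μ⁻((a, e]) < ∞, then ϱ_I extends to a function of bounded variation on [a, e]; in particular the limit ϱ_I(a) := lim_{z↓a} ϱ_I(z) exists (possibly equal to 0). -/
open MeasureTheory Set Filter


/-- `lpos t = log(1 + t⁺) - log(1 - t⁺)`. -/
noncomputable def lpos (t : ℝ) : ℝ := Real.log (1 + max t 0) - Real.log (1 - max t 0)

lemma lpos_nonneg (t : ℝ) : 0 ≤ lpos t := by
  have h0 : 0 ≤ max t 0 := le_max_right _ _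
  have h1 : Real.log (1 - max t 0) ≤ Real.log (1 + max t 0) := by
    set u := max t 0 with hu
    rcases lt_trichotomy u 1 with h | h | h
    · exact Real.log_le_log (by linarith) (by linarith)
    · rw [show (1:ℝ) - u = 0 by linarith, Real.log_zero]
      exact Real.log_nonneg (by linarith)
    · rw [show (1:ℝ) - u = -(u - 1) by ring, Real.log_neg_eq_log]
      exact Real.log_le_log (by linarith) (by linarith)
  simp only [lpos]
  linarith

lemma lpos_of_nonpos {t : ℝ} (ht : t ≤ 0) : lpos t = 0 := by
  simp [lpos, max_eq_right ht]

lemma lpos_exp {x : ℝ} (hx : |x| < 1) :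
    (1 - x) / (1 + x) = Real.exp (lpos (-x) - lpos x) := by
  obtain ⟨hl, hr⟩ := abs_lt.1 hx
  have h1 : (0:ℝ) < 1 + x := by linarith
  have h2 : (0:ℝ) < 1 - x := by linarith
  have key : lpos (-x) - lpos x = Real.log (1 - x) - Real.log (1 + x) := by
    rcases le_total x 0 with h | h
    · rw [lpos_of_nonpos h]
      simp only [lpos, max_eq_left (neg_nonneg.2 h)]
      rw [show (1:ℝ) + -x = 1 - x by ring, show (1:ℝ) - -x = 1 + x by ring]
      ring
    · rw [lpos_of_nonpos (neg_nonpos.2 h)]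
      simp only [lpos, max_eq_left h]
      ring
  rw [key, Real.exp_sub, Real.exp_log h2, Real.exp_log h1]

lemma summable_lpos {ι : Type*} {x : ι → ℝ}
    (hs : Summable fun i => max (x i) 0) : Summable fun i => lpos (x i) := by
  have hu0 : ∀ i, (0:ℝ) ≤ max (x i) 0 := fun i => le_max_right _ _
  have hfin : {i | 1/2 ≤ max (x i) 0}.Finite := by
    have h2 : ∀ᶠ i in cofinite, max (x i) 0 < 1/2 :=
      hs.tendsto_cofinite_zero.eventually (gt_mem_nhds (by norm_num))
    have h3 : {i | ¬ (max (x i) 0 < 1/2)}.Finite := eventually_cofinite.mp h2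
    simpa only [not_lt] using h3
  rw [← hfin.summable_compl_iff]
  apply Summable.of_nonneg_of_le (fun i => lpos_nonneg _)
    (g := fun i : ↥({i | 1/2 ≤ max (x i) 0}ᶜ) => lpos (x ↑i))
    (f := fun i : ↥({i | 1/2 ≤ max (x i) 0}ᶜ) => 3 * max (x ↑i) 0)
  · intro i
    have hui : max (x ↑i) 0 < 1/2 := not_le.1 i.2
    set u := max (x ↑i) 0 with hu
    have hu0' : (0:ℝ) ≤ u := hu0 _
    have hpos : (0:ℝ) < 1 - u := by linarith
    have e1 : Real.log (1 + u) ≤ u := by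
      have := Real.log_le_sub_one_of_pos (show (0:ℝ) < 1 + u by linarith)
      linarith
    have e2 : -Real.log (1 - u) ≤ 2 * u := by
      rw [← Real.log_inv]
      have h3 := Real.log_le_sub_one_of_pos (inv_pos.2 hpos)
      have h4 : (1 - u)⁻¹ - 1 ≤ 2 * u := by
        rw [sub_le_iff_le_add, inv_le_iff_one_le_mul₀ hpos]
        nlinarith
      linarith
    show lpos (x ↑i) ≤ 3 * u
    simp only [lpos, ← hu]
    linarith
  · exact (hs.subtype _).mul_left 3

lemma evar_pair (f g : ℝ → ℝ) (s : Set ℝ) :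
    eVariationOn (fun x => (f x, g x)) s ≤ eVariationOn f s + eVariationOn g s := by
  refine iSup_le ?_
  rintro ⟨m, u, hu, us⟩
  calc ∑ i ∈ Finset.range m,
        edist ((fun x => (f x, g x)) (u (i+1))) ((fun x => (f x, g x)) (u i))
      ≤ ∑ i ∈ Finset.range m,
        (edist (f (u (i+1))) (f (u i)) + edist (g (u (i+1))) (g (u i))) := by
        refine Finset.sum_le_sum fun i _ => ?_
        rw [Prod.edist_eq]
        exact max_le le_self_add le_add_self
    _ = (∑ i ∈ Finset.range m, edist (f (u (i+1))) (f (u i)))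
        + ∑ i ∈ Finset.range m, edist (g (u (i+1))) (g (u i)) := Finset.sum_add_distrib
    _ ≤ _ := add_le_add (eVariationOn.sum_le (f := f) (n := m) hu us) (eVariationOn.sum_le (f := g) (n := m) hu us)

lemma BoundedVariationOn.mul' {f g : ℝ → ℝ} {s : Set ℝ} {R : ℝ} (hR : 0 ≤ R)
    (hfb : ∀ x ∈ s, |f x| ≤ R) (hgb : ∀ x ∈ s, |g x| ≤ R)
    (hf : BoundedVariationOn f s) (hg : BoundedVariationOn g s) :
    BoundedVariationOn (fun x => f x * g x) s := by
  have hpair : BoundedVariationOn (fun x => (f x, g x)) s :=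
    ne_top_of_le_ne_top (ENNReal.add_ne_top.2 ⟨hf, hg⟩) (evar_pair f g s)
  have hlip : LipschitzOnWith (2 * R.toNNReal) (fun q : ℝ × ℝ => q.1 * q.2)
      (Set.Icc (-R) R ×ˢ Set.Icc (-R) R) := by
    apply LipschitzOnWith.of_dist_le_mul
    rintro ⟨x1, x2⟩ hx ⟨y1, y2⟩ hy
    obtain ⟨hx1, hx2⟩ := hx
    obtain ⟨hy1, hy2⟩ := hy
    have bx1 : |x1| ≤ R := abs_le.2 ⟨hx1.1, hx1.2⟩
    have by2 : |y2| ≤ R := abs_le.2 ⟨hy2.1, hy2.2⟩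
    have d1 : dist x1 y1 ≤ dist ((x1, x2) : ℝ × ℝ) (y1, y2) := by
      rw [Prod.dist_eq]; exact le_max_left _ _
    have d2 : dist x2 y2 ≤ dist ((x1, x2) : ℝ × ℝ) (y1, y2) := by
      rw [Prod.dist_eq]; exact le_max_right _ _
    have hcast : ((2 * R.toNNReal : NNReal) : ℝ) = 2 * R := by
      push_cast [Real.coe_toNNReal R hR]; ring
    rw [hcast]
    have key : dist (x1 * x2) (y1 * y2) ≤ R * dist x2 y2 + R * dist x1 y1 := by
      rw [Real.dist_eq, Real.dist_eq, Real.dist_eq]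
      have : x1 * x2 - y1 * y2 = x1 * (x2 - y2) + y2 * (x1 - y1) := by ring
      rw [this]
      calc |x1 * (x2 - y2) + y2 * (x1 - y1)|
          ≤ |x1 * (x2 - y2)| + |y2 * (x1 - y1)| := abs_add_le _ _
        _ = |x1| * |x2 - y2| + |y2| * |x1 - y1| := by rw [abs_mul, abs_mul]
        _ ≤ R * |x2 - y2| + R * |x1 - y1| := by
            nlinarith [abs_nonneg (x2 - y2), abs_nonneg (x1 - y1), abs_nonneg x1, abs_nonneg y2]
    have hd : (0:ℝ) ≤ dist ((x1, x2) : ℝ × ℝ) (y1, y2) := dist_nonneg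
    calc dist (x1 * x2) (y1 * y2) ≤ R * dist x2 y2 + R * dist x1 y1 := key
      _ ≤ R * dist ((x1, x2) : ℝ × ℝ) (y1, y2) + R * dist ((x1, x2) : ℝ × ℝ) (y1, y2) := by
          gcongr
      _ = 2 * R * dist ((x1, x2) : ℝ × ℝ) (y1, y2) := by ring
  have hmaps : MapsTo (fun x => (f x, g x)) s (Set.Icc (-R) R ×ˢ Set.Icc (-R) R) := by
    intro x hx
    have h1 := abs_le.1 (hfb x hx)
    have h2 := abs_le.1 (hgb x hx)
    exact ⟨⟨h1.1, h1.2⟩, ⟨h2.1, h2.2⟩⟩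
  have := hlip.comp_boundedVariationOn hmaps hpair
  simpa [Function.comp_def] using this

lemma AntitoneOn.locallyBV {f : ℝ → ℝ} {s : Set ℝ} (hf : AntitoneOn f s) :
    LocallyBoundedVariationOn f s := by
  have h2 : MonotoneOn (fun x => -f x) s := fun x hx y hy hxy => neg_le_neg (hf hx hy hxy)
  intro c d hc hd
  have h3 := h2.locallyBoundedVariationOn c d hc hd
  have h4 := LipschitzWith.comp_boundedVariationOn
    (f := fun t : ℝ => -t) (LipschitzWith.neg LipschitzWith.id) h3
  simpa [Function.comp_def] using h4

lemma aux_anti {ν : Measure ℝ} {h : ℝ → ℝ} {e : ℝ} (h0 : ∀ y, 0 ≤ h y)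
    {z₁ z₂ : ℝ} (hz : z₁ ≤ z₂) (hν : ν (Set.Ioc z₁ e) ≠ ⊤)
    (hsum : Summable fun y : Set.Ioc z₁ e => h y) :
    2 * (ν (Set.Ioc z₂ e)).toReal + ∑' y : Set.Ioc z₂ e, h ↑y
      ≤ 2 * (ν (Set.Ioc z₁ e)).toReal + ∑' y : Set.Ioc z₁ e, h ↑y := by
  have hsub : Set.Ioc z₂ e ⊆ Set.Ioc z₁ e := Set.Ioc_subset_Ioc_left hz
  have m1 : (ν (Set.Ioc z₂ e)).toReal ≤ (ν (Set.Ioc z₁ e)).toReal :=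
    ENNReal.toReal_mono hν (measure_mono hsub)
  have hind : Summable ((Set.Ioc z₁ e).indicator h) := summable_subtype_iff_indicator.mp hsum
  have hind2 : Summable ((Set.Ioc z₂ e).indicator h) := by
    have := hind.indicator (Set.Ioc z₂ e)
    rwa [Set.indicator_indicator, Set.inter_eq_self_of_subset_left hsub] at this
  have m2 : (∑' y : Set.Ioc z₂ e, h ↑y) ≤ ∑' y : Set.Ioc z₁ e, h ↑y := by
    rw [tsum_subtype, tsum_subtype]
    exact Summable.tsum_le_tsum (fun y => indicator_le_indicator_of_subset hsub h0 y) hind2 hind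
  linarith

/-- With the notation of Lemma 5.8: if `μ⁻((a,e]) < ∞`, then `ϱ` extends to a function of
bounded variation on `[a,e]`; in particular the limit `ϱ(a) = lim_{z↓a} ϱ(z)` exists
(possibly equal to `0`). -/
theorem varrho_extends_bv_of_neg_part_finite
    (a b e : ℝ) (hae : a < e) (heb : e < b)
    (p n : Measure ℝ) (hsing : p.MutuallySingular n)
    (hRadon : ∀ K : Set ℝ, IsCompact K → K ⊆ Set.Ioo a b → p K + n K < ⊤)
    (μa : ℝ → ℝ) (hμa : ∀ z : ℝ, μa z = (p {z}).toReal - (n {z}).toReal)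
    (hatom : ∀ z ∈ Set.Ioo a b, |μa z| < 1)
    (pc nc : Measure ℝ) (hpc : ∀ z : ℝ, pc {z} = 0) (hnc : ∀ z : ℝ, nc {z} = 0)
    (hpdec : ∀ s : Set ℝ, MeasurableSet s → s ⊆ Set.Ioo a b →
      p s = pc s + ∑' z : s, p {(z : ℝ)})
    (hndec : ∀ s : Set ℝ, MeasurableSet s → s ⊆ Set.Ioo a b →
      n s = nc s + ∑' z : s, n {(z : ℝ)})
    (μcI : ℝ → ℝ → ℝ)
    (hμcI : ∀ u v : ℝ, μcI u v = (pc (Set.Ioc u v)).toReal - (nc (Set.Ioc u v)).toReal)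
    (ϱ : ℝ → ℝ)
    (hϱ₁ : ∀ z : ℝ, e ≤ z → z < b → ϱ z =
      Real.exp (2 * μcI e z) * ∏' y : Set.Ioc e z, (1 + μa (y : ℝ)) / (1 - μa (y : ℝ)))
    (hϱ₂ : ∀ z : ℝ, a < z → z < e → ϱ z =
      Real.exp (-2 * μcI z e) * ∏' y : Set.Ioc z e, (1 - μa (y : ℝ)) / (1 + μa (y : ℝ)))
    (hn_fin : n (Set.Ioc a e) < ⊤) :
    ∃ F : ℝ → ℝ, BoundedVariationOn F (Set.Icc a e) ∧
      (∀ z ∈ Set.Ioc a e, F z = ϱ z) ∧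
      Tendsto ϱ (nhdsWithin a (Set.Ioi a)) (nhds (F a)) := by
  -- basic set inclusions and finiteness facts
  have hIoo : ∀ z : ℝ, a ≤ z → Set.Ioc z e ⊆ Set.Ioo a b := fun z hz y hy =>
    ⟨lt_of_le_of_lt hz hy.1, lt_of_le_of_lt hy.2 heb⟩
  have hp_fin : ∀ z : ℝ, a < z → p (Set.Ioc z e) < ⊤ := by
    intro z hz
    have hK : Set.Icc z e ⊆ Set.Ioo a b := fun y hy =>
      ⟨lt_of_lt_of_le hz hy.1, lt_of_le_of_lt hy.2 heb⟩
    exact lt_of_le_of_lt (le_trans (measure_mono Set.Ioc_subset_Icc_self) le_self_add)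
      (hRadon (Set.Icc z e) isCompact_Icc hK)
  have hn_fin' : ∀ z : ℝ, a ≤ z → n (Set.Ioc z e) < ⊤ := fun z hz =>
    lt_of_le_of_lt (measure_mono (Set.Ioc_subset_Ioc_left hz)) hn_fin
  have hnc_fin : ∀ z : ℝ, a ≤ z → nc (Set.Ioc z e) ≠ ⊤ := by
    intro z hz
    have h1 := hndec _ measurableSet_Ioc (hIoo z hz)
    exact (lt_of_le_of_lt (h1 ▸ le_self_add) (hn_fin' z hz)).ne
  have hpc_fin : ∀ z : ℝ, a < z → pc (Set.Ioc z e) ≠ ⊤ := by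
    intro z hz
    have h1 := hpdec _ measurableSet_Ioc (hIoo z hz.le)
    exact (lt_of_le_of_lt (h1 ▸ le_self_add) (hp_fin z hz)).ne
  -- summability of the atomic contributions
  have hsum_ln : ∀ z : ℝ, a ≤ z → Summable (fun y : Set.Ioc z e => lpos (-(μa ↑y))) := by
    intro z hz
    apply summable_lpos
    have h1 := hndec _ measurableSet_Ioc (hIoo z hz)
    have htop : (∑' y : Set.Ioc z e, n {(y : ℝ)}) ≠ ⊤ :=
      ne_top_of_le_ne_top (hn_fin' z hz).ne (h1 ▸ le_add_self)
    refine Summable.of_nonneg_of_le (fun i => le_max_right _ _) ?_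
      (ENNReal.summable_toReal htop)
    intro y
    rw [hμa]
    refine max_le ?_ ENNReal.toReal_nonneg
    have h2 : (0:ℝ) ≤ (p {(y:ℝ)}).toReal := ENNReal.toReal_nonneg
    linarith
  have hsum_lp : ∀ z : ℝ, a < z → Summable (fun y : Set.Ioc z e => lpos (μa ↑y)) := by
    intro z hz
    apply summable_lpos
    have h1 := hpdec _ measurableSet_Ioc (hIoo z hz.le)
    have htop : (∑' y : Set.Ioc z e, p {(y : ℝ)}) ≠ ⊤ :=
      ne_top_of_le_ne_top (hp_fin z hz).ne (h1 ▸ le_add_self)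
    refine Summable.of_nonneg_of_le (fun i => le_max_right _ _) ?_
      (ENNReal.summable_toReal htop)
    intro y
    rw [hμa]
    refine max_le ?_ ENNReal.toReal_nonneg
    have h2 : (0:ℝ) ≤ (n {(y:ℝ)}).toReal := ENNReal.toReal_nonneg
    linarith
  -- the building blocks
  set Nf : ℝ → ℝ := fun z =>
    2 * (nc (Set.Ioc z e)).toReal + ∑' y : Set.Ioc z e, lpos (-(μa ↑y)) with hNf
  set Pf : ℝ → ℝ := fun z =>
    2 * (pc (Set.Ioc z e)).toReal + ∑' y : Set.Ioc z e, lpos (μa ↑y) with hPf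
  set G : ℝ → ℝ := fun z => Real.exp (-(Pf z)) with hG
  set m := sInf (G '' Set.Ioc a e) with hm
  set F : ℝ → ℝ := fun z => Real.exp (Nf z) * (if z ≤ a then m else G z) with hF
  have hNf0 : ∀ z, 0 ≤ Nf z := by
    intro z
    simp only [hNf]
    exact add_nonneg (by positivity) (tsum_nonneg fun y => lpos_nonneg _)
  have hPf0 : ∀ z, 0 ≤ Pf z := by
    intro z
    simp only [hPf]
    exact add_nonneg (by positivity) (tsum_nonneg fun y => lpos_nonneg _)
  have hG1 : ∀ z, G z ≤ 1 := by
    intro z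
    have h2 := Real.exp_le_exp.2 (neg_nonpos.2 (hPf0 z))
    simpa [hG, Real.exp_zero] using h2
  -- monotonicity
  have hNanti : AntitoneOn Nf (Set.Icc a e) := by
    intro z₁ hz₁ z₂ _ hz
    simp only [hNf]
    exact aux_anti (ν := nc) (h := fun y => lpos (-(μa y))) (e := e)
      (fun y => lpos_nonneg _) hz (hnc_fin z₁ hz₁.1) (hsum_ln z₁ hz₁.1)
  have hPanti : ∀ z₁ z₂ : ℝ, a < z₁ → z₁ ≤ z₂ → Pf z₂ ≤ Pf z₁ := by
    intro z₁ z₂ h1 h2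
    simp only [hPf]
    exact aux_anti (ν := pc) (h := fun y => lpos (μa y)) (e := e)
      (fun y => lpos_nonneg _) h2 (hpc_fin z₁ h1) (hsum_lp z₁ h1)
  have hGmono : MonotoneOn G (Set.Ioc a e) := fun z₁ hz₁ z₂ _ hz =>
    Real.exp_le_exp.2 (neg_le_neg (hPanti z₁ z₂ hz₁.1 hz))
  -- the identity F = ϱ on (a, e]
  have hid : ∀ z ∈ Set.Ioc a e, F z = ϱ z := by
    intro z hz
    have hnle : ¬ z ≤ a := not_le.2 hz.1
    rcases eq_or_lt_of_le hz.2 with heq | hlt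
    · subst heq
      have hE : Set.Ioc z z = (∅ : Set ℝ) := Set.Ioc_self z
      have hNfe : Nf z = 0 := by simp [hNf, hE]
      have hPfe : Pf z = 0 := by simp [hPf, hE]
      rw [hϱ₁ z le_rfl heb, hμcI]
      haveI : IsEmpty ↥(Set.Ioc z z) := Set.isEmpty_coe_sort.2 hE
      simp only [hF, hG, if_neg hnle, hNfe, hPfe, hE, measure_empty]
      rw [tprod_empty]
      simp
    · have hy1 : ∀ y : Set.Ioc z e, |μa ↑y| < 1 := fun y => hatom _ (hIoo z hz.1.le y.2)
      have hs1 := hsum_ln z hz.1.le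
      have hs2 := hsum_lp z hz.1
      have hprod : (∏' y : Set.Ioc z e, (1 - μa (y : ℝ)) / (1 + μa (y : ℝ)))
          = Real.exp ((∑' y : Set.Ioc z e, lpos (-(μa ↑y)))
              - ∑' y : Set.Ioc z e, lpos (μa ↑y)) := by
        have h3 : HasSum (fun y : Set.Ioc z e => lpos (-(μa ↑y)) - lpos (μa ↑y))
            ((∑' y : Set.Ioc z e, lpos (-(μa ↑y))) - ∑' y : Set.Ioc z e, lpos (μa ↑y)) :=
          hs1.hasSum.sub hs2.hasSum
        have h4 := h3.rexp
        rw [← h4.tprod_eq]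
        exact tprod_congr fun y => lpos_exp (hy1 y)
      rw [hϱ₂ z hz.1 hlt, hprod, hμcI]
      simp only [hF, hG, if_neg hnle, hNf, hPf]
      rw [← Real.exp_add, ← Real.exp_add]
      congr 1
      ring
  -- bounded variation
  have haIcc : a ∈ Set.Icc a e := left_mem_Icc.2 hae.le
  have heIcc : e ∈ Set.Icc a e := right_mem_Icc.2 hae.le
  have hmbdd : BddBelow (G '' Set.Ioc a e) := ⟨0, by
    rintro x ⟨w, _, rfl⟩; exact (Real.exp_pos _).le⟩
  have hne : (Set.Ioc a e).Nonempty := ⟨e, hae, le_rfl⟩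
  have hm_le : ∀ z ∈ Set.Ioc a e, m ≤ G z := fun z hz => csInf_le hmbdd ⟨z, hz, rfl⟩
  have hm0 : 0 ≤ m := le_csInf (hne.image _) (by
    rintro x ⟨w, _, rfl⟩; exact (Real.exp_pos _).le)
  have hm1 : m ≤ 1 := (hm_le e ⟨hae, le_rfl⟩).trans (hG1 e)
  have hGtmono : MonotoneOn (fun z => if z ≤ a then m else G z) (Set.Icc a e) := by
    intro z₁ h₁ z₂ h₂ h
    show (if z₁ ≤ a then m else G z₁) ≤ (if z₂ ≤ a then m else G z₂)
    by_cases c1 : z₁ ≤ a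
    · rw [if_pos c1]
      by_cases c2 : z₂ ≤ a
      · rw [if_pos c2]
      · rw [if_neg c2]; exact hm_le z₂ ⟨not_le.1 c2, h₂.2⟩
    · have c2 : ¬ z₂ ≤ a := fun hc => c1 (h.trans hc)
      rw [if_neg c1, if_neg c2]
      exact hGmono ⟨not_le.1 c1, h₁.2⟩ ⟨not_le.1 c2, h₂.2⟩ h
  have bv1 : BoundedVariationOn (fun z => Real.exp (Nf z)) (Set.Icc a e) := by
    have hNexp_anti : AntitoneOn (fun z => Real.exp (Nf z)) (Set.Icc a e) :=
      fun z₁ h₁ z₂ h₂ h => Real.exp_le_exp.2 (hNanti h₁ h₂ h)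
    have h2 := hNexp_anti.locallyBV a e haIcc heIcc
    rwa [Set.inter_self] at h2
  have bv2 : BoundedVariationOn (fun z => if z ≤ a then m else G z) (Set.Icc a e) := by
    have h2 := hGtmono.locallyBoundedVariationOn a e haIcc heIcc
    rwa [Set.inter_self] at h2
  have hbv : BoundedVariationOn F (Set.Icc a e) := by
    rw [hF]
    set R := max (Real.exp (Nf a)) 1 with hR
    have hR0 : (0:ℝ) ≤ R := le_trans zero_le_one (le_max_right _ _)
    refine BoundedVariationOn.mul' hR0 ?_ ?_ bv1 bv2
    · intro x hx
      show |Real.exp (Nf x)| ≤ R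
      rw [abs_of_pos (Real.exp_pos _)]
      exact le_max_of_le_left (Real.exp_le_exp.2 (hNanti haIcc hx hx.1))
    · intro x hx
      show |if x ≤ a then m else G x| ≤ R
      by_cases c : x ≤ a
      · rw [if_pos c, abs_of_nonneg hm0]
        exact le_max_of_le_right hm1
      · rw [if_neg c, abs_of_pos (Real.exp_pos _)]
        exact le_max_of_le_right (hG1 x)
  -- the limit of G at a from the right
  have hne' : (Set.Ioo a e).Nonempty := ⟨(a + e)/2, by constructor <;> linarith⟩
  have hGlim : Tendsto G (nhdsWithin a (Set.Ioi a)) (nhds m) := by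
    have hbddB : BddBelow (G '' Set.Ioo a e) := ⟨0, by
      rintro x ⟨w, _, rfl⟩; exact (Real.exp_pos _).le⟩
    have h1 := MonotoneOn.tendsto_nhdsWithin_Ioo_right hne'
      (hGmono.mono Set.Ioo_subset_Ioc_self) hbddB
    have heq : sInf (G '' Set.Ioo a e) = m := by
      apply le_antisymm
      · apply le_csInf (hne.image _)
        rintro x ⟨w, hw, rfl⟩
        have hmid : (a + w)/2 ∈ Set.Ioo a e := by
          constructor
          · linarith [hw.1]
          · have : (a + w)/2 < w := by linarith [hw.1]
            linarith [hw.2]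
        calc sInf (G '' Set.Ioo a e) ≤ G ((a + w)/2) := csInf_le hbddB ⟨_, hmid, rfl⟩
          _ ≤ G w := hGmono ⟨hmid.1, hmid.2.le⟩ hw (by linarith [hw.1])
      · apply le_csInf (hne'.image _)
        rintro x ⟨w, hw, rfl⟩
        exact csInf_le hmbdd ⟨w, Set.Ioo_subset_Ioc_self hw, rfl⟩
    rwa [heq] at h1
  -- the limit of Nf at a from the right
  have hbddA : BddAbove (Nf '' Set.Ioo a e) := ⟨Nf a, by
    rintro x ⟨w, hw, rfl⟩
    exact hNanti haIcc (Set.Ioo_subset_Icc_self hw) hw.1.le⟩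
  have hNlim : Tendsto Nf (nhdsWithin a (Set.Ioi a)) (nhds (Nf a)) := by
    have h1 := AntitoneOn.tendsto_nhdsWithin_Ioo_right hne'
      (hNanti.mono Set.Ioo_subset_Icc_self) hbddA
    suffices hsup : sSup (Nf '' Set.Ioo a e) = Nf a by rwa [hsup] at h1
    apply le_antisymm
    · apply csSup_le (hne'.image _)
      rintro x ⟨w, hw, rfl⟩
      exact hNanti haIcc (Set.Ioo_subset_Icc_self hw) hw.1.le
    · -- via a sequence decreasing to a
      set zk : ℕ → ℝ := fun k => a + (e - a)/(k + 2) with hzk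
      have hea : (0:ℝ) < e - a := sub_pos.2 hae
      have hzk_mem : ∀ k, zk k ∈ Set.Ioo a e := by
        intro k
        have hk2 : (0:ℝ) < (k:ℝ) + 2 := by positivity
        constructor
        · have : (0:ℝ) < (e - a)/((k:ℝ) + 2) := div_pos hea hk2
          simp only [hzk]; linarith
        · have h3 : (e - a)/((k:ℝ) + 2) < e - a := by
            apply div_lt_self hea
            have : (0:ℝ) ≤ (k:ℝ) := Nat.cast_nonneg k
            linarith
          simp only [hzk]; linarith
      have hzk0 : Tendsto zk atTop (nhds a) := by
        have h2 : Tendsto (fun k : ℕ => (e - a)/((k:ℝ) + 2)) atTop (nhds 0) := by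
          have h3 := (tendsto_const_div_atTop_nhds_zero_nat (e - a)).comp
            (tendsto_add_atTop_nat 2)
          have h4 : (fun k : ℕ => (e - a)/((k + 2 : ℕ) : ℝ))
              = fun k : ℕ => (e - a)/((k:ℝ) + 2) := by
            funext k; push_cast; ring_nf
          rwa [Function.comp_def, h4] at h3
        have h5 := tendsto_const_nhds (α := ℕ) (f := atTop) (x := a) |>.add h2
        simpa using h5
      have hmono_sets : Monotone (fun k => Set.Ioc (zk k) e) := by
        intro k l hkl
        apply Set.Ioc_subset_Ioc_left
        simp only [hzk]
        have hcast : ((k:ℝ) + 2) ≤ ((l:ℝ) + 2) := by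
          have : (k:ℝ) ≤ (l:ℝ) := Nat.cast_le.2 hkl
          linarith
        gcongr
      have hUnion : (⋃ k, Set.Ioc (zk k) e) = Set.Ioc a e := by
        apply Set.Subset.antisymm
        · exact Set.iUnion_subset fun k => Set.Ioc_subset_Ioc_left (hzk_mem k).1.le
        · intro x hx
          obtain ⟨k, hk⟩ := (hzk0.eventually (gt_mem_nhds hx.1)).exists
          exact Set.mem_iUnion.2 ⟨k, hk, hx.2⟩
      have hmeas_tend : Tendsto (fun k => (nc (Set.Ioc (zk k) e)).toReal) atTop
          (nhds ((nc (Set.Ioc a e)).toReal)) := by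
        have h2 := tendsto_measure_iUnion_atTop (μ := nc) hmono_sets
        rw [hUnion] at h2
        exact (ENNReal.tendsto_toReal (hnc_fin a le_rfl)).comp h2
      -- the tsum part
      have hind : Summable ((Set.Ioc a e).indicator (fun y => lpos (-(μa y)))) :=
        summable_subtype_iff_indicator.mp (hsum_ln a le_rfl)
      have hind_k : ∀ k, Summable ((Set.Ioc (zk k) e).indicator (fun y => lpos (-(μa y)))) := by
        intro k
        have h2 := hind.indicator (Set.Ioc (zk k) e)
        rwa [Set.indicator_indicator,
          Set.inter_eq_self_of_subset_left (Set.Ioc_subset_Ioc_left (hzk_mem k).1.le)] at h2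
      have h0' : ∀ y, (0:ℝ) ≤ lpos (-(μa y)) := fun y => lpos_nonneg _
      have h0ind : ∀ (s : Set ℝ) (y : ℝ), 0 ≤ s.indicator (fun y => lpos (-(μa y))) y :=
        fun s y => Set.indicator_nonneg (fun t _ => h0' t) y
      have hTle : ∀ k, (∑' y, (Set.Ioc (zk k) e).indicator (fun y => lpos (-(μa y))) y)
          ≤ ∑' y, (Set.Ioc a e).indicator (fun y => lpos (-(μa y))) y := fun k =>
        Summable.tsum_le_tsum (fun y => indicator_le_indicator_of_subset
          (Set.Ioc_subset_Ioc_left (hzk_mem k).1.le) h0' y) (hind_k k) hind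
      have hT0 : ∀ k, (0:ℝ) ≤ ∑' y, (Set.Ioc (zk k) e).indicator (fun y => lpos (-(μa y))) y :=
        fun k => tsum_nonneg (h0ind _)
      have hTtend : Tendsto
          (fun k => ∑' y, (Set.Ioc (zk k) e).indicator (fun y => lpos (-(μa y))) y) atTop
          (nhds (∑' y, (Set.Ioc a e).indicator (fun y => lpos (-(μa y))) y)) := by
        rw [tendsto_order]
        constructor
        · intro l hl
          obtain ⟨s₀, hs₀⟩ := (hind.hasSum.eventually (eventually_gt_nhds hl)).exists
          set s₁ := s₀.filter (· ∈ Set.Ioc a e) with hs₁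
          have hsum_eq : ∑ y ∈ s₁, (Set.Ioc a e).indicator (fun y => lpos (-(μa y))) y
              = ∑ y ∈ s₀, (Set.Ioc a e).indicator (fun y => lpos (-(μa y))) y := by
            apply Finset.sum_subset (Finset.filter_subset _ _)
            intro y hy hyn
            apply Set.indicator_of_notMem
            intro hmem
            exact hyn (Finset.mem_filter.2 ⟨hy, hmem⟩)
          rcases s₁.eq_empty_or_nonempty with hemp | hnemp
          · have h3 : ∑ y ∈ s₀, (Set.Ioc a e).indicator (fun y => lpos (-(μa y))) y = 0 := by
              rw [← hsum_eq, hemp, Finset.sum_empty]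
            rw [h3] at hs₀
            exact Filter.Eventually.of_forall fun k => lt_of_lt_of_le hs₀ (hT0 k)
          · have hδmem : s₁.min' hnemp ∈ Set.Ioc a e :=
              (Finset.mem_filter.1 (s₁.min'_mem hnemp)).2
            filter_upwards [hzk0.eventually (gt_mem_nhds hδmem.1)] with k hk
            have hsub2 : ∀ y ∈ s₁, y ∈ Set.Ioc (zk k) e := by
              intro y hy
              have hy1 := (Finset.mem_filter.1 hy).2
              exact ⟨lt_of_lt_of_le hk (s₁.min'_le y hy), hy1.2⟩
            calc l < ∑ y ∈ s₀, (Set.Ioc a e).indicator (fun y => lpos (-(μa y))) y := hs₀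
              _ = ∑ y ∈ s₁, (Set.Ioc a e).indicator (fun y => lpos (-(μa y))) y := hsum_eq.symm
              _ = ∑ y ∈ s₁, (Set.Ioc (zk k) e).indicator (fun y => lpos (-(μa y))) y := by
                  refine Finset.sum_congr rfl fun y hy => ?_
                  rw [Set.indicator_of_mem (Finset.mem_filter.1 hy).2,
                    Set.indicator_of_mem (hsub2 y hy)]
              _ ≤ ∑' y, (Set.Ioc (zk k) e).indicator (fun y => lpos (-(μa y))) y :=
                  Summable.sum_le_tsum s₁ (fun y _ => h0ind _ y) (hind_k k)
        · intro u hu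
          exact Filter.Eventually.of_forall fun k => lt_of_le_of_lt (hTle k) hu
      have hcomb : Tendsto (fun k => Nf (zk k)) atTop (nhds (Nf a)) := by
        have h2 := (hmeas_tend.const_mul 2).add hTtend
        have h3 : ∀ s : Set ℝ, (∑' y, s.indicator (fun y => lpos (-(μa y))) y)
            = ∑' y : s, lpos (-(μa ↑y)) := fun s => (tsum_subtype s _).symm
        simp only [h3] at h2
        simp only [hNf]
        exact h2
      refine le_of_tendsto hcomb (Filter.Eventually.of_forall fun k => ?_)
      exact le_csSup hbddA ⟨zk k, hzk_mem k, rfl⟩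
  -- conclusion
  refine ⟨F, hbv, hid, ?_⟩
  have hFa : F a = Real.exp (Nf a) * m := by simp [hF]
  rw [hFa]
  have hmain : Tendsto (fun z => Real.exp (Nf z) * G z) (nhdsWithin a (Set.Ioi a))
      (nhds (Real.exp (Nf a) * m)) :=
    (Real.continuous_exp.continuousAt.tendsto.comp hNlim).mul hGlim
  apply hmain.congr'
  filter_upwards [Ioo_mem_nhdsGT hae] with z hz
  have h2 := hid z ⟨hz.1, hz.2.le⟩
  rw [← h2]
  simp [hF, if_neg (not_le.2 hz.1)]
end

section
/- Let ρ ∈ L¹_loc(ℝ) be positive, and let s : I → ℝ be the function s(x) = ∫_e^x 1/ρ(y) dy on an open interval I on which 1/ρ ∈ L¹_loc and ρ > 0 a.e., so that s is absolutely continuous and strictly increasing. Let t = s⁻¹ : J → I where J = s(I). Then t is absolutely continuous on J and t'(y) = ρ(t(y)) for a.e. y ∈ J. -/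
open MeasureTheory Set

/-- Let `ρ ∈ L¹_loc(ℝ)` be positive a.e. on the open interval `I = (a,b)` with
`1/ρ ∈ L¹_loc(I)`, let `s(x) = ∫_e^x 1/ρ(y) dy` be the (strictly increasing, absolutely
continuous) scale function and `t = s⁻¹` on `J = s(I)`. Then `t` is absolutely continuous
on `J` with `t'(y) = ρ(t(y))` for a.e. `y`, i.e. `ρ ∘ t` is locally integrable on `J` and
`t(y₂) - t(y₁) = ∫_{y₁}^{y₂} ρ(t(y)) dy`. -/
theorem inverse_scale_absolutely_continuous
    (a b e : ℝ) (hae : a < e) (heb : e < b) (ρ : ℝ → ℝ)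
    (hρloc : LocallyIntegrable ρ volume)
    (hρpos : ∀ᵐ x ∂(volume.restrict (Set.Ioo a b)), 0 < ρ x)
    (hinv : ∀ K : Set ℝ, IsCompact K → K ⊆ Set.Ioo a b →
      IntegrableOn (fun y => (ρ y)⁻¹) K volume)
    (s t : ℝ → ℝ)
    (hs : ∀ x ∈ Set.Ioo a b, s x = ∫ y in e..x, (ρ y)⁻¹)
    (hmono : StrictMonoOn s (Set.Ioo a b))
    (ht : ∀ x ∈ Set.Ioo a b, t (s x) = x) :
    ∀ y₁ ∈ s '' Set.Ioo a b, ∀ y₂ ∈ s '' Set.Ioo a b, y₁ ≤ y₂ →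
      IntegrableOn (fun y => ρ (t y)) (Set.Icc y₁ y₂) volume ∧
      (∫ y in y₁..y₂, ρ (t y)) = t y₂ - t y₁ := by
  rintro y₁ ⟨x₁, hx₁, rfl⟩ y₂ ⟨x₂, hx₂, rfl⟩ hy
  have hx12 : x₁ ≤ x₂ := by
    by_contra h
    push_neg at h
    exact absurd hy (not_le.2 (hmono hx₂ hx₁ h))
  -- the big compact interval [c, d] ⊆ (a, b) containing e, x₁, x₂
  set c := min e x₁ with hc
  set d := max e x₂ with hd
  have hcd : c ≤ d := le_trans (min_le_left _ _) (le_max_left _ _)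
  have hKsub : Icc c d ⊆ Ioo a b := fun x hx =>
    ⟨lt_of_lt_of_le (lt_min hae hx₁.1) hx.1, lt_of_le_of_lt hx.2 (max_lt heb hx₂.2)⟩
  have hIccsub : Icc x₁ x₂ ⊆ Icc c d := Icc_subset_Icc (min_le_right _ _) (le_max_right _ _)
  have hIccab : Icc x₁ x₂ ⊆ Ioo a b := hIccsub.trans hKsub
  have hint : IntegrableOn (fun y => (ρ y)⁻¹) (Icc c d) volume := hinv _ isCompact_Icc hKsub
  have hii : IntervalIntegrable (fun y => (ρ y)⁻¹) volume c d :=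
    (by rwa [uIcc_of_le hcd] : IntegrableOn (fun y => (ρ y)⁻¹) (uIcc c d) volume).intervalIntegrable
  -- the clamp to [x₁, x₂]
  set π : ℝ → ℝ := fun x => max x₁ (min x x₂) with hπ
  have hπmem : ∀ x, π x ∈ Icc x₁ x₂ := fun x => ⟨le_max_left _ _, max_le hx12 (min_le_right _ _)⟩
  have hπid : ∀ x ∈ Icc x₁ x₂, π x = x := fun x hx => by
    simp only [hπ]; rw [min_eq_left hx.2, max_eq_right hx.1]
  have hπcont : Continuous π := continuous_const.max (continuous_id.min continuous_const)
  have hπmono : Monotone π := fun u v huv => max_le_max le_rfl (min_le_min huv le_rfl)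
  -- the primitive F and the clamped scale function S
  set F : ℝ → ℝ := fun x => ∫ y in e..x, (ρ y)⁻¹ with hF
  have heK : e ∈ Icc c d := ⟨min_le_left _ _, le_max_left _ _⟩
  have hFcont : ContinuousOn F (Icc c d) := by
    have := intervalIntegral.continuousOn_primitive_interval' hii
      (by rw [uIcc_of_le hcd]; exact heK)
    rwa [uIcc_of_le hcd] at this
  set S : ℝ → ℝ := fun x => F (π x) with hS
  have hScont : Continuous S := hFcont.comp_continuous hπcont fun x => hIccsub (hπmem x)
  have hSval : ∀ x, S x = s (π x) := fun x => by
    simp only [hS]; rw [hs _ (hIccab (hπmem x))]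
  have hSs : ∀ x ∈ Icc x₁ x₂, S x = s x := fun x hx => by rw [hSval x, hπid x hx]
  have hSmono : Monotone S := fun u v huv => by
    rw [hSval u, hSval v]
    exact hmono.monotoneOn (hIccab (hπmem u)) (hIccab (hπmem v)) (hπmono huv)
  -- S as a Stieltjes function
  set f : StieltjesFunction ℝ := ⟨S, hSmono, fun x => hScont.continuousAt.continuousWithinAt⟩
    with hfdef
  -- the density
  set g : ℝ → ENNReal := (Icc x₁ x₂).indicator (fun y => ENNReal.ofReal (ρ y)⁻¹) with hg
  have hρmeas : AEMeasurable ρ volume := hρloc.aestronglyMeasurable.aemeasurable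
  have hgmeas : AEMeasurable g volume :=
    AEMeasurable.indicator (ENNReal.measurable_ofReal.comp_aemeasurable hρmeas.inv)
      measurableSet_Icc
  have hnn : ∀ᵐ x ∂(volume.restrict (Ioo a b)), 0 ≤ (ρ x)⁻¹ :=
    hρpos.mono fun x hx => le_of_lt (inv_pos.2 hx)
  -- interval integrability on subintervals of [c, d]
  have hiimem : ∀ p q : ℝ, p ∈ Icc c d → q ∈ Icc c d →
      IntervalIntegrable (fun y => (ρ y)⁻¹) volume p q := fun p q hp hq =>
    hii.mono_set (uIcc_subset_uIcc (by rw [uIcc_of_le hcd]; exact hp)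
      (by rw [uIcc_of_le hcd]; exact hq))
  -- key : the Stieltjes measure of S is withDensity g
  have hmeasure : f.measure = volume.withDensity g := by
    refine Measure.ext_of_Ioc f.measure _ fun p q hpq => ?_
    rw [StieltjesFunction.measure_Ioc, withDensity_apply _ measurableSet_Ioc]
    have hπpq : π p ≤ π q := hπmono hpq.le
    have h1 : f q - f p = ∫ y in Ioc (π p) (π q), (ρ y)⁻¹ := by
      show F (π q) - F (π p) = _
      rw [← intervalIntegral.integral_of_le hπpq]
      exact intervalIntegral.integral_interval_sub_left
        (hiimem e (π q) heK (hIccsub (hπmem q)))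
        (hiimem e (π p) heK (hIccsub (hπmem p)))
    have hsub' : Ioc (π p) (π q) ⊆ Ioo a b := fun x hx =>
      hIccab ⟨le_trans (hπmem p).1 hx.1.le, le_trans hx.2 (hπmem q).2⟩
    have h3 : ENNReal.ofReal (∫ y in Ioc (π p) (π q), (ρ y)⁻¹)
        = ∫⁻ y in Ioc (π p) (π q), ENNReal.ofReal (ρ y)⁻¹ := by
      apply ofReal_integral_eq_lintegral_ofReal
      · exact hint.mono_set fun x hx => hIccsub ⟨le_trans (hπmem p).1 hx.1.le,
          le_trans hx.2 (hπmem q).2⟩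
      · exact ae_restrict_of_ae_restrict_of_subset hsub' hnn
    have h5 : (Icc x₁ x₂ ∩ Ioc p q : Set ℝ) =ᵐ[volume] (Ioc (π p) (π q) : Set ℝ) := by
      rw [Filter.eventuallyEq_set]
      have hne : ∀ᵐ x : ℝ, x ≠ x₁ := by
        refine (ae_iff).2 ?_
        simp
      filter_upwards [hne] with x hxne
      simp only [mem_inter_iff, mem_Icc, mem_Ioc, hπ]
      constructor
      · rintro ⟨⟨h1', h2'⟩, h3', h4'⟩
        have hx1 : x₁ < x := lt_of_le_of_ne h1' (Ne.symm hxne)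
        exact ⟨max_lt hx1 (lt_of_le_of_lt (min_le_left _ _) h3'),
          le_max_of_le_right (le_min h4' h2')⟩
      · rintro ⟨h1', h2'⟩
        have hxle : x ≤ x₂ := le_trans h2' (max_le hx12 (min_le_right _ _))
        have hxgt : x₁ < x := lt_of_le_of_lt (le_max_left _ _) h1'
        have hminlt : min p x₂ < x := lt_of_le_of_lt (le_max_right _ _) h1'
        have hpx : p < x := by
          rcases le_total p x₂ with h | h
          · rwa [min_eq_left h] at hminlt
          · rw [min_eq_right h] at hminlt; linarith
        have hxq : x ≤ q := by
          rcases le_total x₁ (min q x₂) with h | h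
          · have := le_trans h2' (max_le h le_rfl)
            exact le_trans this (min_le_left _ _)
          · rw [max_eq_left h] at h2'; linarith
        exact ⟨⟨hxgt.le, hxle⟩, hpx, hxq⟩
    calc ENNReal.ofReal (f q - f p)
        = ∫⁻ y in Ioc (π p) (π q), ENNReal.ofReal (ρ y)⁻¹ := by rw [h1, h3]
      _ = ∫⁻ y in Icc x₁ x₂ ∩ Ioc p q, ENNReal.ofReal (ρ y)⁻¹ := (setLIntegral_congr h5).symm
      _ = ∫⁻ y in Ioc p q, g y := by
          rw [hg, lintegral_indicator measurableSet_Icc,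
            Measure.restrict_restrict measurableSet_Icc]
  have hrn : f.measure.rnDeriv volume =ᵐ[volume] g := by
    rw [hmeasure]; exact Measure.rnDeriv_withDensity₀ volume hgmeas
  -- a.e. differentiability of S with derivative ρ⁻¹ on (x₁, x₂)
  have hsubIoo : Ioo x₁ x₂ ⊆ Ioo a b := fun x hx => hIccab (Ioo_subset_Icc_self hx)
  have hderiv : ∀ᵐ x ∂(volume.restrict (Ioo x₁ x₂)), HasDerivAt S ((ρ x)⁻¹) x := by
    have h1 : ∀ᵐ x, HasDerivAt S ((f.measure.rnDeriv volume x).toReal) x := f.ae_hasDerivAt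
    have h2 : ∀ᵐ x ∂(volume.restrict (Ioo x₁ x₂)), 0 < ρ x :=
      ae_restrict_of_ae_restrict_of_subset hsubIoo hρpos
    filter_upwards [ae_restrict_of_ae h1, ae_restrict_of_ae hrn, h2,
      ae_restrict_mem measurableSet_Ioo] with x hx1 hx2 hx3 hx4
    have hgx : g x = ENNReal.ofReal (ρ x)⁻¹ := indicator_of_mem (Ioo_subset_Icc_self hx4) _
    rwa [hx2, hgx, ENNReal.toReal_ofReal (inv_nonneg.2 hx3.le)] at hx1
  -- extract a measurable full-measure set A ⊆ (x₁, x₂) of differentiability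
  set B : Set ℝ := ({x : ℝ | ¬ HasDerivAt S ((ρ x)⁻¹) x} ∩ Ioo x₁ x₂) with hB
  have hBnull : volume B = 0 := by
    have := (ae_iff).1 hderiv
    rwa [Measure.restrict_apply' measurableSet_Ioo] at this
  set A : Set ℝ := Ioo x₁ x₂ \ toMeasurable volume B with hA
  have hAmeas : MeasurableSet A := measurableSet_Ioo.diff (measurableSet_toMeasurable _ _)
  have hAsub : A ⊆ Ioo x₁ x₂ := diff_subset
  have hAP : ∀ x ∈ A, HasDerivAt S ((ρ x)⁻¹) x := by
    rintro x ⟨hx1, hx2⟩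
    by_contra h
    exact hx2 (subset_toMeasurable _ _ ⟨h, hx1⟩)
  have hAae : A =ᵐ[volume] Ioo x₁ x₂ := by
    rw [ae_eq_set]
    constructor
    · rw [diff_eq_empty.2 hAsub]; exact measure_empty
    · refine measure_mono_null (fun x hx => ?_) ((measure_toMeasurable B).trans hBnull)
      rcases hx with ⟨hx1, hx2⟩
      by_contra h
      exact hx2 ⟨hx1, h⟩
  have hAab : A ⊆ Ioo a b := hAsub.trans hsubIoo
  have hSinj : InjOn S A := by
    intro u hu v hv huv
    rw [hSs u (Ioo_subset_Icc_self (hAsub hu)), hSs v (Ioo_subset_Icc_self (hAsub hv))] at huv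
    exact hmono.injOn (hAab hu) (hAab hv) huv
  have hAderiv : ∀ x ∈ A, HasDerivWithinAt S ((fun x => (ρ x)⁻¹) x) A x := fun x hx =>
    (hAP x hx).hasDerivWithinAt
  -- positivity on A
  have hApos : ∀ᵐ x ∂(volume.restrict A), 0 < ρ x :=
    ae_restrict_of_ae_restrict_of_subset hAab hρpos
  -- the integrand on A is a.e. 1
  have hone : (fun x => |(ρ x)⁻¹| • ρ (t (S x))) =ᵐ[volume.restrict A] fun _ => (1 : ℝ) := by
    filter_upwards [hApos, ae_restrict_mem hAmeas] with x hx1 hx2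
    have hx3 : x ∈ Icc x₁ x₂ := Ioo_subset_Icc_self (hAsub hx2)
    rw [hSs x hx3, ht x (hIccab hx3), smul_eq_mul, abs_of_nonneg (inv_nonneg.2 hx1.le),
      inv_mul_cancel₀ (ne_of_gt hx1)]
  have hvolA : volume A = ENNReal.ofReal (x₂ - x₁) := by
    rw [measure_congr hAae, Real.volume_Ioo]
  have hArhs : ∫ x in A, |(ρ x)⁻¹| • ρ (t (S x)) = x₂ - x₁ := by
    rw [integral_congr_ae hone, setIntegral_const, smul_eq_mul, mul_one, measureReal_def, hvolA,
      ENNReal.toReal_ofReal (sub_nonneg.2 hx12)]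
  -- the image S '' A
  have hSAmeas : MeasurableSet (S '' A) :=
    hAmeas.image_of_continuousOn_injOn hScont.continuousOn hSinj
  have hSAsub : S '' A ⊆ Ioo (s x₁) (s x₂) := by
    rintro _ ⟨x, hx, rfl⟩
    have hx' := hAsub hx
    rw [hSs x (Ioo_subset_Icc_self hx')]
    exact ⟨hmono hx₁ (hIccab (Ioo_subset_Icc_self hx')) hx'.1,
      hmono (hIccab (Ioo_subset_Icc_self hx')) hx₂ hx'.2⟩
  have hSAfin : volume (S '' A) ≠ ⊤ :=
    (lt_of_le_of_lt (measure_mono hSAsub)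
      (by rw [Real.volume_Ioo]; exact ENNReal.ofReal_lt_top)).ne
  -- volume of the image
  have hcov1 := integral_image_eq_integral_abs_deriv_smul hAmeas hAderiv hSinj fun _ => (1 : ℝ)
  have habs : (fun x => |(ρ x)⁻¹| • (1 : ℝ)) =ᵐ[volume.restrict A] fun x => (ρ x)⁻¹ := by
    filter_upwards [hApos] with x hx
    rw [smul_eq_mul, mul_one, abs_of_nonneg (inv_nonneg.2 hx.le)]
  have hintA : ∫ x in A, (ρ x)⁻¹ = s x₂ - s x₁ := by
    rw [setIntegral_congr_set hAae, ← integral_Ioc_eq_integral_Ioo,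
      ← intervalIntegral.integral_of_le hx12, hs x₁ hx₁, hs x₂ hx₂]
    exact (intervalIntegral.integral_interval_sub_left
      (hiimem e x₂ heK (hIccsub ⟨hx12, le_rfl⟩))
      (hiimem e x₁ heK (hIccsub ⟨le_rfl, hx12⟩))).symm
  have hSAvol : volume (S '' A) = ENNReal.ofReal (s x₂ - s x₁) := by
    have h1 : ∫ x in S '' A, (1 : ℝ) = s x₂ - s x₁ := by
      rw [hcov1, integral_congr_ae habs, hintA]
    rw [setIntegral_const, smul_eq_mul, mul_one] at h1
    rw [← h1, measureReal_def, ENNReal.ofReal_toReal hSAfin]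
  have hSAae : S '' A =ᵐ[volume] Icc (s x₁) (s x₂) := by
    have h0 : volume (Ioo (s x₁) (s x₂) \ S '' A) = 0 := by
      rw [measure_diff hSAsub hSAmeas.nullMeasurableSet hSAfin, Real.volume_Ioo, hSAvol,
        tsub_self]
    have h1 : S '' A =ᵐ[volume] Ioo (s x₁) (s x₂) := by
      rw [ae_eq_set]
      exact ⟨by rw [diff_eq_empty.2 hSAsub]; exact measure_empty, h0⟩
    exact h1.trans Ioo_ae_eq_Icc
  -- main integral identity
  have hcov := integral_image_eq_integral_abs_deriv_smul hAmeas hAderiv hSinj fun y => ρ (t y)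
  have hmain : ∫ y in Icc (s x₁) (s x₂), ρ (t y) = x₂ - x₁ := by
    rw [setIntegral_congr_set hSAae.symm, hcov, hArhs]
  -- integrability
  have hInt : IntegrableOn (fun y => ρ (t y)) (Icc (s x₁) (s x₂)) volume := by
    have h1 : IntegrableOn (fun x => |(ρ x)⁻¹| • ρ (t (S x))) A volume := by
      refine (integrableOn_const ?_).congr hone.symm
      rw [hvolA]; exact ENNReal.ofReal_ne_top
    have h2 : IntegrableOn (fun y => ρ (t y)) (S '' A) volume :=
      (integrableOn_image_iff_integrableOn_abs_deriv_smul hAmeas hAderiv hSinj _).2 h1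
    exact h2.congr_set_ae hSAae.symm
  refine ⟨hInt, ?_⟩
  rw [ht x₁ hx₁, ht x₂ hx₂, intervalIntegral.integral_of_le hy,
    ← integral_Icc_eq_integral_Ioc, hmain]
end
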